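/- Let S be an inverse semigroup and let H be a closed inverse subsemigroup of S. Let F be the set of idempotents of H. Then F is a filter in E(S), and F↑ ⊆ H ⊆ F̄, where F̄ = {s ∈ S : for all f ∈ F, inv(s)·f·s ∈ F and s·f·inv(s) ∈ F}. Moreover F↑ is itself a closed inverse subsemigroup of S with set of idempotents F. -/
import Mathlib


namespace InvSgpPaper

/-- `inv` makes the semigroup `S` an inverse semigroup: `a * inv a * a = a`,
`inv a * a * inv a = inv a`, and all idempotents commute. -/
structure IsInvSgp (S : Type*) [Semigroup S] (inv : S → S) : Prop where
  mul_inv_mul : ∀ a : S, a * inv a * a = a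
  inv_mul_inv : ∀ a : S, inv a * a * inv a = inv a
  idem_comm : ∀ e f : S, e * e = e → f * f = f → e * f = f * e

section Defs

variable {S X Y : Type*} [Semigroup S]

/-- The natural partial order on an inverse semigroup:
`a ≤ b` iff `a = e * b` for some idempotent `e`. -/
def nle (a b : S) : Prop := ∃ e : S, e * e = e ∧ a = e * b

/-- The upward closure `A↑` of a subset `A`. -/
def up (A : Set S) : Set S := {s : S | ∃ a ∈ A, nle a s}

/-- A closed inverse subsemigroup: closed under multiplication, under `inv`,
and upward closed (`H = H↑`). -/
def IsClosedInvSub (inv : S → S) (H : Set S) : Prop :=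
  (∀ a ∈ H, ∀ b ∈ H, a * b ∈ H) ∧ (∀ a ∈ H, inv a ∈ H) ∧ up H = H

/-- The left coset `(sH)↑ = {x | s * h ≤ x for some h ∈ H}`. -/
def lcoset (s : S) (H : Set S) : Set S := {x : S | ∃ h ∈ H, nle (s * h) x}

/-- The set of idempotents of a subset `A`. -/
def idemSet (A : Set S) : Set S := {e ∈ A | e * e = e}

/-- A filter in `E(S)`: a nonempty set of idempotents closed under
multiplication and upward closed within `E(S)`. -/
def IsFilterE (F : Set S) : Prop :=
  F.Nonempty ∧ (∀ e ∈ F, e * e = e) ∧ (∀ e ∈ F, ∀ f ∈ F, e * f ∈ F) ∧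
    (∀ e ∈ F, ∀ f : S, f * f = f → nle e f → f ∈ F)

/-- `F̄ = {s ∈ S : ∀ f ∈ F, inv s * f * s ∈ F ∧ s * f * inv s ∈ F}`. -/
def fbar (inv : S → S) (F : Set S) : Set S :=
  {s : S | ∀ f ∈ F, inv s * f * s ∈ F ∧ s * f * inv s ∈ F}

/-- The minimum group congruence `σ`: `a σ b` iff some `c` satisfies `c ≤ a` and `c ≤ b`. -/
def sigmaRel (a b : S) : Prop := ∃ c : S, nle c a ∧ nle c b

/-- The elementwise product of two subsets. -/
def setMul (A B : Set S) : Set S := {x : S | ∃ a ∈ A, ∃ b ∈ B, x = a * b}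

/-- The elementwise inverse `A⁻¹` of a subset. -/
def setInv (inv : S → S) (A : Set S) : Set S := inv '' A

/-- An atlas: a subset `A` with `A·A⁻¹·A = A`. -/
def IsAtlas (inv : S → S) (A : Set S) : Prop := setMul (setMul A (setInv inv A)) A = A

/-- A (down-)directed subset: nonempty, and any two elements have a common
lower bound inside it. -/
def IsDirectedSet (A : Set S) : Prop :=
  A.Nonempty ∧ ∀ a ∈ A, ∀ b ∈ A, ∃ c ∈ A, nle c a ∧ nle c b

/-- An action of `S` on `X` by partial maps, axioms (A1) and (A2). -/
def IsAction (act : S → X → Option X) : Prop :=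
  (∀ e : S, e * e = e → ∀ x y : X, act e x = some y → y = x) ∧
    (∀ (s t : S) (x : X), act (s * t) x = (act t x).bind (act s))

/-- Transitivity of an action. -/
def IsTransitiveAct (act : S → X → Option X) : Prop :=
  ∀ x y : X, ∃ s : S, act s x = some y

/-- Effectiveness of an action: every point is in the domain of some element. -/
def IsEffectiveAct (act : S → X → Option X) : Prop :=
  ∀ x : X, ∃ (s : S) (x' : X), act s x = some x'

/-- The stabilizer of a point. -/
def stab (act : S → X → Option X) (x : X) : Set S := {s : S | act s x = some x}

/-- A morphism of `S`-actions. -/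
def IsMorphism (actX : S → X → Option X) (actY : S → Y → Option Y) (α : X → Y) : Prop :=
  ∀ (s : S) (x x' : X), actX s x = some x' → actY s (α x) = some (α x')

/-- A strong morphism of `S`-actions. -/
def IsStrongMorphism (actX : S → X → Option X) (actY : S → Y → Option Y)
    (α : X → Y) : Prop :=
  IsMorphism actX actY α ∧
    ∀ (s : S) (x : X) (y' : Y), actY s (α x) = some y' → ∃ x' : X, actX s x = some x'

end Defs

section L
variable {S : Type*} [Semigroup S] {inv : S → S} (hS : IsInvSgp S inv)
include hS

lemma idem_mul_inv (a : S) : (a * inv a) * (a * inv a) = a * inv a := by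
  calc (a * inv a) * (a * inv a) = (a * inv a * a) * inv a := by simp only [mul_assoc]
    _ = a * inv a := by rw [hS.mul_inv_mul]

lemma idem_inv_mul (a : S) : (inv a * a) * (inv a * a) = inv a * a := by
  calc (inv a * a) * (inv a * a) = (inv a * a * inv a) * a := by simp only [mul_assoc]
    _ = inv a * a := by rw [hS.inv_mul_inv]

lemma uniq {a x y : S} (hx1 : a * x * a = a) (hx2 : x * a * x = x)
    (hy1 : a * y * a = a) (hy2 : y * a * y = y) : x = y := by
  have hxa : (x * a) * (x * a) = x * a := by
    rw [mul_assoc, ← mul_assoc a, hx1]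
  have hya : (y * a) * (y * a) = y * a := by
    rw [mul_assoc, ← mul_assoc a, hy1]
  have hax : (a * x) * (a * x) = a * x := by
    rw [mul_assoc, ← mul_assoc x, hx2]
  have hay : (a * y) * (a * y) = a * y := by
    rw [mul_assoc, ← mul_assoc y, hy2]
  have h1 : x = y * a * x := by
    conv_lhs => rw [← hx2, ← hy1]
    calc x * (a * y * a) * x
        = ((x*a)*(y*a))*x := by simp only [mul_assoc]
      _ = ((y*a)*(x*a))*x := by rw [hS.idem_comm _ _ hxa hya]
      _ = (y*(a*x*a))*x := by simp only [mul_assoc]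
      _ = y*a*x := by rw [hx1]
  have h2 : y = y * a * x := by
    conv_lhs => rw [← hy2, ← hx1]
    calc y * (a * x * a) * y
        = y*((a*x)*(a*y)) := by simp only [mul_assoc]
      _ = y*((a*y)*(a*x)) := by rw [hS.idem_comm _ _ hax hay]
      _ = (y*a*y)*(a*x) := by simp only [mul_assoc]
      _ = y*a*x := by rw [hy2, mul_assoc]
  rw [h1, ← h2]

lemma inv_idem {e : S} (he : e * e = e) : inv e = e :=
  uniq hS (hS.mul_inv_mul e) (hS.inv_mul_inv e) (by rw [he, he]) (by rw [he, he])

lemma inv_mul_eq (a b : S) : inv (a * b) = inv b * inv a := by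
  have key : a * b * (inv b * inv a) * (a * b) = a * b := by
    calc a * b * (inv b * inv a) * (a * b)
        = a*((b*inv b)*(inv a*a))*b := by simp only [mul_assoc]
      _ = a*((inv a*a)*(b*inv b))*b := by
          rw [hS.idem_comm _ _ (idem_mul_inv hS b) (idem_inv_mul hS a)]
      _ = (a*inv a*a)*(b*inv b*b) := by simp only [mul_assoc]
      _ = a * b := by rw [hS.mul_inv_mul, hS.mul_inv_mul]
  have key2 : (inv b * inv a) * (a * b) * (inv b * inv a) = inv b * inv a := by
    calc (inv b * inv a) * (a * b) * (inv b * inv a)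
        = inv b*((inv a*a)*(b*inv b))*inv a := by simp only [mul_assoc]
      _ = inv b*((b*inv b)*(inv a*a))*inv a := by
          rw [hS.idem_comm _ _ (idem_inv_mul hS a) (idem_mul_inv hS b)]
      _ = (inv b*b*inv b)*(inv a*a*inv a) := by simp only [mul_assoc]
      _ = inv b * inv a := by rw [hS.inv_mul_inv, hS.inv_mul_inv]
  exact uniq hS (hS.mul_inv_mul (a*b)) (hS.inv_mul_inv (a*b)) key key2

lemma nle_refl (a : S) : nle a a := ⟨a * inv a, idem_mul_inv hS a, (hS.mul_inv_mul a).symm⟩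

lemma nle_trans {a b c : S} (h1 : nle a b) (h2 : nle b c) : nle a c := by
  obtain ⟨e, he, hab⟩ := h1
  obtain ⟨f, hf, hbc⟩ := h2
  refine ⟨e * f, ?_, by rw [hab, hbc, mul_assoc]⟩
  calc e*f*(e*f) = e*((f*e)*f) := by simp only [mul_assoc]
    _ = e*((e*f)*f) := by rw [hS.idem_comm _ _ he hf]
    _ = (e*e)*(f*f) := by simp only [mul_assoc]
    _ = e*f := by rw [he, hf]

lemma nle_to_right {a b : S} (h : nle a b) : ∃ f : S, f * f = f ∧ a = b * f := by
  obtain ⟨e, he, hab⟩ := h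
  refine ⟨inv a * a, idem_inv_mul hS a, ?_⟩
  have hia : inv a = inv b * e := by rw [hab, inv_mul_eq hS, inv_idem hS he]
  rw [hia, hab]
  refine Eq.symm ?_
  calc b*(inv b*e*(e*b))
      = (b*inv b)*((e*e)*b) := by simp only [mul_assoc]
    _ = ((b*inv b)*e)*b := by rw [he, ← mul_assoc]
    _ = (e*(b*inv b))*b := by rw [← hS.idem_comm _ _ he (idem_mul_inv hS b)]
    _ = e*(b*inv b*b) := by simp only [mul_assoc]
    _ = e*b := by rw [hS.mul_inv_mul]

lemma right_to_nle {a b f : S} (hf : f * f = f) (hab : a = b * f) : nle a b := by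
  refine ⟨a * inv a, idem_mul_inv hS a, ?_⟩
  have hia : inv a = f * inv b := by rw [hab, inv_mul_eq hS, inv_idem hS hf]
  rw [hia, hab]
  refine Eq.symm ?_
  calc b*f*(f*inv b)*b
      = b*((f*f)*(inv b*b)) := by simp only [mul_assoc]
    _ = b*(f*(inv b*b)) := by rw [hf]
    _ = b*((inv b*b)*f) := by rw [hS.idem_comm _ _ hf (idem_inv_mul hS b)]
    _ = (b*(inv b*b))*f := by simp only [mul_assoc]
    _ = b*f := by rw [← mul_assoc, hS.mul_inv_mul]

lemma nle_mul {a b c d : S} (h1 : nle a b) (h2 : nle c d) : nle (a * c) (b * d) := by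
  have hac : nle (a * c) (b * c) := by
    obtain ⟨e, he, hab⟩ := h1
    exact ⟨e, he, by rw [hab, mul_assoc]⟩
  have hcd : nle (b * c) (b * d) := by
    obtain ⟨f, hf, hcd⟩ := nle_to_right hS h2
    exact right_to_nle hS hf (by rw [hcd, mul_assoc])
  exact nle_trans hS hac hcd

lemma nle_inv {a b : S} (h : nle a b) : nle (inv a) (inv b) := by
  obtain ⟨e, he, hab⟩ := h
  exact right_to_nle hS he (by rw [hab, inv_mul_eq hS, inv_idem hS he])

lemma idem_mul {e f : S} (he : e * e = e) (hf : f * f = f) : (e * f) * (e * f) = e * f := by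
  calc e*f*(e*f) = e*((f*e)*f) := by simp only [mul_assoc]
    _ = e*((e*f)*f) := by rw [hS.idem_comm _ _ he hf]
    _ = (e*e)*(f*f) := by simp only [mul_assoc]
    _ = e*f := by rw [he, hf]

lemma conj_idem_l {s f : S} (hf : f * f = f) :
    (inv s * f * s) * (inv s * f * s) = inv s * f * s := by
  calc (inv s*f*s)*(inv s*f*s)
      = inv s*((f*(s*inv s))*(f*s)) := by simp only [mul_assoc]
    _ = inv s*(((s*inv s)*f)*(f*s)) := by rw [hS.idem_comm _ _ hf (idem_mul_inv hS s)]
    _ = (inv s*s*inv s)*(f*f*s) := by simp only [mul_assoc]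
    _ = inv s*(f*s) := by rw [hS.inv_mul_inv, hf]
    _ = inv s*f*s := (mul_assoc _ _ _).symm

lemma conj_idem_r {s f : S} (hf : f * f = f) :
    (s * f * inv s) * (s * f * inv s) = s * f * inv s := by
  calc (s*f*inv s)*(s*f*inv s)
      = s*((f*(inv s*s))*(f*inv s)) := by simp only [mul_assoc]
    _ = s*(((inv s*s)*f)*(f*inv s)) := by rw [hS.idem_comm _ _ hf (idem_inv_mul hS s)]
    _ = (s*inv s*s)*(f*f*inv s) := by simp only [mul_assoc]
    _ = s*(f*inv s) := by rw [hS.mul_inv_mul, hf]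
    _ = s*f*inv s := (mul_assoc _ _ _).symm

end L

/-- The set `F` of idempotents of a closed inverse subsemigroup `H`
is a filter in `E(S)` and `F↑ ⊆ H ⊆ F̄`; moreover `F↑` is itself a closed inverse
subsemigroup with set of idempotents `F`. -/
theorem stmt5 {S : Type*} [Semigroup S] (inv : S → S) (hS : IsInvSgp S inv)
    (H : Set S) (hne : H.Nonempty) (hH : IsClosedInvSub inv H) :
    IsFilterE (idemSet H) ∧
    up (idemSet H) ⊆ H ∧
    H ⊆ fbar inv (idemSet H) ∧
    IsClosedInvSub inv (up (idemSet H)) ∧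
    idemSet (up (idemSet H)) = idemSet H := by
  obtain ⟨hmulH, hinvH, hupH⟩ := hH
  have hFne : (idemSet H).Nonempty := by
    obtain ⟨a, ha⟩ := hne
    exact ⟨a * inv a, hmulH a ha (inv a) (hinvH a ha), idem_mul_inv hS a⟩
  have hFmul : ∀ e ∈ idemSet H, ∀ f ∈ idemSet H, e * f ∈ idemSet H := by
    rintro e ⟨heH, he⟩ f ⟨hfH, hf⟩
    exact ⟨hmulH e heH f hfH, idem_mul hS he hf⟩
  have hFup : ∀ e ∈ idemSet H, ∀ f : S, f * f = f → nle e f → f ∈ idemSet H := by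
    rintro e ⟨heH, he⟩ f hf hef
    have : f ∈ up H := ⟨e, heH, hef⟩
    rw [hupH] at this
    exact ⟨this, hf⟩
  have hupF : up (idemSet H) ⊆ H := by
    rintro s ⟨e, ⟨heH, he⟩, hes⟩
    have : s ∈ up H := ⟨e, heH, hes⟩
    rwa [hupH] at this
  refine ⟨⟨hFne, fun e he => he.2, hFmul, hFup⟩, hupF, ?_, ?_, ?_⟩
  · rintro s hs f ⟨hfH, hf⟩
    constructor
    · exact ⟨hmulH _ (hmulH _ (hinvH s hs) f hfH) s hs, conj_idem_l hS hf⟩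
    · exact ⟨hmulH _ (hmulH s hs f hfH) _ (hinvH s hs), conj_idem_r hS hf⟩
  · refine ⟨?_, ?_, ?_⟩
    · rintro a ⟨e, heF, hea⟩ b ⟨f, hfF, hfb⟩
      exact ⟨e * f, hFmul e heF f hfF, nle_mul hS hea hfb⟩
    · rintro a ⟨e, heF, hea⟩
      refine ⟨e, heF, ?_⟩
      have := nle_inv hS hea
      rwa [inv_idem hS heF.2] at this
    · ext s
      constructor
      · rintro ⟨t, ⟨e, heF, het⟩, hts⟩
        exact ⟨e, heF, nle_trans hS het hts⟩
      · intro hs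
        exact ⟨s, hs, nle_refl hS s⟩
  · ext s
    constructor
    · rintro ⟨⟨e, ⟨heH, he⟩, hes⟩, hss⟩
      have : s ∈ up H := ⟨e, heH, hes⟩
      rw [hupH] at this
      exact ⟨this, hss⟩
    · intro hf
      exact ⟨⟨s, hf, nle_refl hS s⟩, hf.2⟩


end InvSgpPaper
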